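/- Fix V ∈ [0,1] and let 𝒳 = {1,2}. Define probability measures P₁ and P₂ on 𝒳 by P₁{1} = P₂{2} = (1+V)/2 and P₁{2} = P₂{1} = (1−V)/2, and let Q be the uniform probability measure Q{1} = Q{2} = 1/2. Then the total variation distance between P₁ and P₂ equals V, and for every convex function f:[0,∞)→ℝ with f(1)=0, D_f(P₁||Q) + D_f(P₂||Q) = f(1+V) + f(1−V). Consequently, the infimum of inf_Q ( D_f(P₁||Q) + D_f(P₂||Q) ) over all pairs of probability measures P₁, P₂ with total variation distance V equals f(1+V) + f(1−V). -/

import Mathlib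

open MeasureTheory Real

/-- The `f`-divergence `D_f(P‖Q) = ∫ f(dP/dQ) dQ` (real-valued; meaningful when `P ≪ Q`,
in which case it agrees with the usual definition). -/
noncomputable def fDivR {X : Type*} [MeasurableSpace X] (f : ℝ → ℝ) (P Q : Measure X) : ℝ :=
  ∫ x, f ((P.rnDeriv Q x).toReal) ∂Q

lemma rnDeriv_mul_eq (μ ν : Measure (Fin 2)) [IsFiniteMeasure μ] [IsFiniteMeasure ν]
    (h : μ ≪ ν) (x : Fin 2) : μ.rnDeriv ν x * ν {x} = μ {x} := by
  conv_rhs => rw [← Measure.withDensity_rnDeriv_eq μ ν h]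
  rw [withDensity_apply _ (measurableSet_singleton x), lintegral_singleton]

lemma fDivR_eq (f : ℝ → ℝ) (μ ν : Measure (Fin 2)) [IsFiniteMeasure ν] :
    fDivR f μ ν = (ν {0}).toReal * f ((μ.rnDeriv ν 0).toReal)
      + (ν {1}).toReal * f ((μ.rnDeriv ν 1).toReal) := by
  rw [fDivR, integral_fintype _, Fin.sum_univ_two]
  simp [smul_eq_mul, Measure.real_def]
  exact Integrable.of_finite

lemma isFiniteMeasure_mix (a b : ℝ) :
    IsFiniteMeasure ((ENNReal.ofReal a • Measure.dirac 0 +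
      ENNReal.ofReal b • Measure.dirac 1 : Measure (Fin 2))) := by
  constructor
  simp only [Measure.add_apply, Measure.smul_apply, smul_eq_mul, measure_univ, mul_one]
  exact ENNReal.add_lt_top.mpr ⟨ENNReal.ofReal_lt_top, ENNReal.ofReal_lt_top⟩

lemma mix_apply (a b : ℝ) (x : Fin 2) :
    (ENNReal.ofReal a • Measure.dirac 0 +
      ENNReal.ofReal b • Measure.dirac 1 : Measure (Fin 2)) {x}
      = if x = 0 then ENNReal.ofReal a else ENNReal.ofReal b := by
  fin_cases x <;>
    simp [Measure.dirac_apply, Set.indicator, (by decide : (0 : Fin 2) ≠ 1),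
      (by decide : (1 : Fin 2) ≠ 0)]

theorem statement4 (V : ℝ) (hV0 : 0 ≤ V) (hV1 : V ≤ 1)
    (f : ℝ → ℝ) (hf : ConvexOn ℝ (Set.Ici 0) f) (hf1 : f 1 = 0)
    (P₁ P₂ Q : Measure (Fin 2))
    (hP₁ : P₁ = ENNReal.ofReal ((1 + V) / 2) • Measure.dirac 0 +
      ENNReal.ofReal ((1 - V) / 2) • Measure.dirac 1)
    (hP₂ : P₂ = ENNReal.ofReal ((1 - V) / 2) • Measure.dirac 0 +
      ENNReal.ofReal ((1 + V) / 2) • Measure.dirac 1)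
    (hQ : Q = ENNReal.ofReal (1 / 2) • Measure.dirac 0 +
      ENNReal.ofReal (1 / 2) • Measure.dirac 1) :
    -- the total variation distance between `P₁` and `P₂` equals `V`
    2⁻¹ * (|(P₁ {0}).toReal - (P₂ {0}).toReal| + |(P₁ {1}).toReal - (P₂ {1}).toReal|) = V ∧
    -- the uniform `Q` attains the bound of Corollary 2 exactly
    fDivR f P₁ Q + fDivR f P₂ Q = f (1 + V) + f (1 - V) ∧
    -- and no probability measure `Q'` does better (so the infimum over `Q'` is attained)
    (∀ Q' : Measure (Fin 2), IsProbabilityMeasure Q' → P₁ ≪ Q' → P₂ ≪ Q' →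
      f (1 + V) + f (1 - V) ≤ fDivR f P₁ Q' + fDivR f P₂ Q') := by
  have h1V : (0:ℝ) ≤ (1 + V) / 2 := by linarith
  have h2V : (0:ℝ) ≤ (1 - V) / 2 := by linarith
  haveI : IsFiniteMeasure P₁ := hP₁ ▸ isFiniteMeasure_mix _ _
  haveI : IsFiniteMeasure P₂ := hP₂ ▸ isFiniteMeasure_mix _ _
  haveI : IsFiniteMeasure Q := hQ ▸ isFiniteMeasure_mix _ _
  have hP₁0 : P₁ {0} = ENNReal.ofReal ((1 + V) / 2) := by rw [hP₁, mix_apply]; simp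
  have hP₁1 : P₁ {1} = ENNReal.ofReal ((1 - V) / 2) := by rw [hP₁, mix_apply]; simp
  have hP₂0 : P₂ {0} = ENNReal.ofReal ((1 - V) / 2) := by rw [hP₂, mix_apply]; simp
  have hP₂1 : P₂ {1} = ENNReal.ofReal ((1 + V) / 2) := by rw [hP₂, mix_apply]; simp
  have hQ0 : Q {0} = ENNReal.ofReal (1 / 2) := by rw [hQ, mix_apply]; simp
  have hQ1 : Q {1} = ENNReal.ofReal (1 / 2) := by rw [hQ, mix_apply]; simp
  -- generic extraction of rnDeriv values
  have key : ∀ (μ ν : Measure (Fin 2)) (_ : IsFiniteMeasure μ) (_ : IsFiniteMeasure ν)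
      (_ : μ ≪ ν) (x : Fin 2), (ν {x}).toReal * (μ.rnDeriv ν x).toReal = (μ {x}).toReal := by
    intro μ ν _ _ h x
    have := rnDeriv_mul_eq μ ν h x
    rw [← this, ENNReal.toReal_mul, mul_comm]
  refine ⟨?_, ?_, ?_⟩
  · rw [hP₁0, hP₁1, hP₂0, hP₂1, ENNReal.toReal_ofReal h1V, ENNReal.toReal_ofReal h2V]
    have e1 : (1 + V) / 2 - (1 - V) / 2 = V := by ring
    have e2 : (1 - V) / 2 - (1 + V) / 2 = -V := by ring
    rw [e1, e2, abs_neg, abs_of_nonneg hV0]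
    ring
  · -- uniform Q
    have hac : ∀ (μ : Measure (Fin 2)), μ ≪ Q := by
      intro μ
      refine Measure.AbsolutelyContinuous.mk ?_
      intro s _ hs
      have he : s = ∅ := by
        rw [Set.eq_empty_iff_forall_notMem]
        intro x hx
        have h1 : Q {x} ≤ Q s := measure_mono (Set.singleton_subset_iff.mpr hx)
        rw [hs] at h1
        have h2 : Q {x} = 0 := le_antisymm h1 zero_le
        rw [hQ, mix_apply] at h2
        split_ifs at h2 <;> simp [ENNReal.ofReal_eq_zero] at h2 <;> linarith
      simp [he]
    have r10 : (P₁.rnDeriv Q 0).toReal = 1 + V := by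
      have := key P₁ Q ‹_› ‹_› (hac P₁) 0
      rw [hQ0, hP₁0, ENNReal.toReal_ofReal (by norm_num), ENNReal.toReal_ofReal h1V] at this
      linarith
    have r11 : (P₁.rnDeriv Q 1).toReal = 1 - V := by
      have := key P₁ Q ‹_› ‹_› (hac P₁) 1
      rw [hQ1, hP₁1, ENNReal.toReal_ofReal (by norm_num), ENNReal.toReal_ofReal h2V] at this
      linarith
    have r20 : (P₂.rnDeriv Q 0).toReal = 1 - V := by
      have := key P₂ Q ‹_› ‹_› (hac P₂) 0
      rw [hQ0, hP₂0, ENNReal.toReal_ofReal (by norm_num), ENNReal.toReal_ofReal h2V] at this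
      linarith
    have r21 : (P₂.rnDeriv Q 1).toReal = 1 + V := by
      have := key P₂ Q ‹_› ‹_› (hac P₂) 1
      rw [hQ1, hP₂1, ENNReal.toReal_ofReal (by norm_num), ENNReal.toReal_ofReal h1V] at this
      linarith
    rw [fDivR_eq, fDivR_eq, r10, r11, r20, r21, hQ0, hQ1,
      ENNReal.toReal_ofReal (by norm_num)]
    ring
  · intro Q' hQ' hac1 hac2
    set q0 : ℝ := (Q' {0}).toReal with hq0
    set q1 : ℝ := (Q' {1}).toReal with hq1
    have hq0n : 0 ≤ q0 := ENNReal.toReal_nonneg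
    have hq1n : 0 ≤ q1 := ENNReal.toReal_nonneg
    have hsum : q0 + q1 = 1 := by
      have hu : ({0} : Set (Fin 2)) ∪ {1} = Set.univ := by
        ext x; fin_cases x <;> simp
      have hd : Disjoint ({0} : Set (Fin 2)) {1} := by
        simp [Set.disjoint_singleton]
      have := measure_union (μ := Q') hd (measurableSet_singleton 1)
      rw [hu, measure_univ] at this
      rw [hq0, hq1, ← ENNReal.toReal_add (measure_ne_top _ _) (measure_ne_top _ _), ← this]
      simp
    set a0 : ℝ := (P₁.rnDeriv Q' 0).toReal
    set a1 : ℝ := (P₁.rnDeriv Q' 1).toReal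
    set b0 : ℝ := (P₂.rnDeriv Q' 0).toReal
    set b1 : ℝ := (P₂.rnDeriv Q' 1).toReal
    have ha0 : q0 * a0 = (1 + V) / 2 := by
      have := key P₁ Q' ‹_› ⟨measure_lt_top _ _⟩ hac1 0
      rw [hP₁0, ENNReal.toReal_ofReal h1V] at this; exact this
    have ha1 : q1 * a1 = (1 - V) / 2 := by
      have := key P₁ Q' ‹_› ⟨measure_lt_top _ _⟩ hac1 1
      rw [hP₁1, ENNReal.toReal_ofReal h2V] at this; exact this
    have hb0 : q0 * b0 = (1 - V) / 2 := by
      have := key P₂ Q' ‹_› ⟨measure_lt_top _ _⟩ hac2 0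
      rw [hP₂0, ENNReal.toReal_ofReal h2V] at this; exact this
    have hb1 : q1 * b1 = (1 + V) / 2 := by
      have := key P₂ Q' ‹_› ⟨measure_lt_top _ _⟩ hac2 1
      rw [hP₂1, ENNReal.toReal_ofReal h1V] at this; exact this
    have ja : f (1 + V) ≤ q0 * f a0 + q1 * f b1 := by
      have := hf.2 (x := a0) (y := b1) (Set.mem_Ici.mpr ENNReal.toReal_nonneg)
        (Set.mem_Ici.mpr ENNReal.toReal_nonneg) hq0n hq1n hsum
      simp only [smul_eq_mul] at this
      calc f (1 + V) = f (q0 * a0 + q1 * b1) := by rw [ha0, hb1]; ring_nf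
        _ ≤ q0 * f a0 + q1 * f b1 := this
    have jb : f (1 - V) ≤ q0 * f b0 + q1 * f a1 := by
      have := hf.2 (x := b0) (y := a1) (Set.mem_Ici.mpr ENNReal.toReal_nonneg)
        (Set.mem_Ici.mpr ENNReal.toReal_nonneg) hq0n hq1n hsum
      simp only [smul_eq_mul] at this
      calc f (1 - V) = f (q0 * b0 + q1 * a1) := by rw [hb0, ha1]; ring_nf
        _ ≤ q0 * f b0 + q1 * f a1 := this
    rw [fDivR_eq, fDivR_eq]
    rw [← hq0, ← hq1]
    linarith
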